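/- Let a, v ∈ ℝ² be linearly independent, 0 < ε < 1, and let T be the linear map with T a = a and T v = (1−ε)v. Let Γ be a twice-differentiable regular curve with Γ(0) = a and Γ'(0) = v/‖v‖₂, and set Γ̃ = T ∘ Γ. Then the curvature of Γ̃ at parameter 0 equals (1−ε)^{−2} times the curvature of Γ at parameter 0. -/

import Mathlib

/-- If `T a = a`, `T v = (1-ε)v` with `a, v` linearly independent and `0 < ε < 1`, and `Γ`
is a regular twice-differentiable curve with `Γ(0) = a`, `Γ'(0) = v/‖v‖`, then the
curvature of `T ∘ Γ` at `0` is `(1-ε)⁻²` times the curvature of `Γ` at `0`, where the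
curvature at `0` of a curve with first and second derivatives `p, q` there is
`√(‖p‖²‖q‖² − ⟨p,q⟩²)/‖p‖³`. -/
theorem stmt17 (a v : EuclideanSpace ℝ (Fin 2)) (hli : LinearIndependent ℝ ![a, v])
    (ε : ℝ) (hε0 : 0 < ε) (hε1 : ε < 1)
    (T : EuclideanSpace ℝ (Fin 2) →ₗ[ℝ] EuclideanSpace ℝ (Fin 2))
    (hTa : T a = a) (hTv : T v = (1 - ε) • v)
    (Γ Γ' : ℝ → EuclideanSpace ℝ (Fin 2)) (Γ''₀ : EuclideanSpace ℝ (Fin 2))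
    (hΓ' : ∀ t, HasDerivAt Γ (Γ' t) t) (hreg : ∀ t, Γ' t ≠ 0)
    (hΓ'' : HasDerivAt Γ' Γ''₀ 0)
    (hΓ0 : Γ 0 = a) (hΓ'0 : Γ' 0 = ‖v‖⁻¹ • v) :
    Real.sqrt (‖T (Γ' 0)‖ ^ 2 * ‖T Γ''₀‖ ^ 2 - (inner ℝ (T (Γ' 0)) (T Γ''₀) : ℝ) ^ 2) /
        ‖T (Γ' 0)‖ ^ 3 =
      ((1 - ε) ^ 2)⁻¹ *
        (Real.sqrt (‖Γ' 0‖ ^ 2 * ‖Γ''₀‖ ^ 2 - (inner ℝ (Γ' 0) Γ''₀ : ℝ) ^ 2) / ‖Γ' 0‖ ^ 3) := by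
  have hε : (0:ℝ) < 1 - ε := by linarith
  have hTp : T (Γ' 0) = (1 - ε) • Γ' 0 := by
    rw [hΓ'0, map_smul, hTv, smul_comm]
  -- coordinates of Γ''₀ in the basis (a, v)
  have hcard : Fintype.card (Fin 2) = Module.finrank ℝ (EuclideanSpace ℝ (Fin 2)) := by
    simp [finrank_euclideanSpace]
  let B := basisOfLinearIndependentOfCardEqFinrank hli hcard
  obtain ⟨c0, c1, hq⟩ : ∃ c0 c1 : ℝ, Γ''₀ = c0 • a + c1 • v := by
    refine ⟨B.repr Γ''₀ 0, B.repr Γ''₀ 1, ?_⟩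
    have h := B.sum_repr Γ''₀
    rw [Fin.sum_univ_two] at h
    simpa [B, coe_basisOfLinearIndependentOfCardEqFinrank] using h.symm
  have hTq : T Γ''₀ = c0 • a + (c1 * (1 - ε)) • v := by
    rw [hq, map_add, map_smul, map_smul, hTa, hTv, smul_smul]
  have key : ‖T (Γ' 0)‖ ^ 2 * ‖T Γ''₀‖ ^ 2 - (inner ℝ (T (Γ' 0)) (T Γ''₀) : ℝ) ^ 2
      = (1 - ε) ^ 2 * (‖Γ' 0‖ ^ 2 * ‖Γ''₀‖ ^ 2 - (inner ℝ (Γ' 0) Γ''₀ : ℝ) ^ 2) := by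
    rw [hTp, hTq]
    simp only [← real_inner_self_eq_norm_sq, hq, hΓ'0, inner_add_left,
      inner_add_right, real_inner_smul_left, real_inner_smul_right]
    rw [real_inner_comm v a]
    ring
  have hp0 : Γ' 0 ≠ 0 := hreg 0
  have hn : ‖T (Γ' 0)‖ = (1 - ε) * ‖Γ' 0‖ := by
    rw [hTp, norm_smul, Real.norm_eq_abs, abs_of_pos hε]
  rw [key, hn, Real.sqrt_mul (by positivity), Real.sqrt_sq hε.le]
  have hpn : ‖Γ' 0‖ ≠ 0 := norm_ne_zero_iff.mpr hp0
  field_simp
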